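/- arXiv:2109.15243 — 2 statements merged into one kernel-verified Lean document; each statement's English description precedes it below -/
import Mathlib

section
/- There are infinitely many n ∈ ℕ with h_n < h_{n+1} < h_{n+2}. -/
def t (n : ℕ) : ℤ := (-1) ^ ((Nat.digits 2 n).sum)

def h : ℕ → ℤ
  | 0 => 0
  | 1 => 1
  | (n + 2) => t (n + 2) * h (n + 1) + h n

def e : ℕ → ℤ
  | 0 => 1
  | 1 => 0
  | (n + 2) => t (n + 2) * e (n + 1) + e n

lemma t_odd (n : ℕ) : t (2 * n + 1) = - t n := by
  unfold t
  rw [Nat.digits_def' (by norm_num : 1 < 2) (by omega),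
    (by omega : (2 * n + 1) % 2 = 1), (by omega : (2 * n + 1) / 2 = n)]
  simp [pow_succ]; ring

lemma t_even (n : ℕ) (hn : 0 < n) : t (2 * n) = t n := by
  unfold t
  rw [Nat.digits_def' (by norm_num : 1 < 2) (by omega),
    (by omega : (2 * n) % 2 = 0), (by omega : (2 * n) / 2 = n)]
  simp

lemma t0 : t 0 = 1 := by simp [t]
lemma t1 : t 1 = -1 := by rw [show (1:ℕ) = 2*0+1 from rfl, t_odd, t0]
lemma t2 : t 2 = -1 := by rw [show (2:ℕ) = 2*1 from rfl, t_even 1 (by norm_num), t1]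
lemma t3 : t 3 = 1 := by rw [show (3:ℕ) = 2*1+1 from rfl, t_odd, t1]; norm_num
lemma t4 : t 4 = -1 := by rw [show (4:ℕ) = 2*2 from rfl, t_even 2 (by norm_num), t2]
lemma t5 : t 5 = 1 := by rw [show (5:ℕ) = 2*2+1 from rfl, t_odd, t2]; norm_num
lemma t6 : t 6 = 1 := by rw [show (6:ℕ) = 2*3 from rfl, t_even 3 (by norm_num), t3]
lemma t7 : t 7 = -1 := by rw [show (7:ℕ) = 2*3+1 from rfl, t_odd, t3]
lemma t8 : t 8 = -1 := by rw [show (8:ℕ) = 2*4 from rfl, t_even 4 (by norm_num), t4]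
lemma t9 : t 9 = 1 := by rw [show (9:ℕ) = 2*4+1 from rfl, t_odd, t4]; norm_num
lemma t10 : t 10 = 1 := by rw [show (10:ℕ) = 2*5 from rfl, t_even 5 (by norm_num), t5]
lemma t11 : t 11 = -1 := by rw [show (11:ℕ) = 2*5+1 from rfl, t_odd, t5]
lemma t12 : t 12 = 1 := by rw [show (12:ℕ) = 2*6 from rfl, t_even 6 (by norm_num), t6]
lemma t13 : t 13 = -1 := by rw [show (13:ℕ) = 2*6+1 from rfl, t_odd, t6]
lemma t14 : t 14 = -1 := by rw [show (14:ℕ) = 2*7 from rfl, t_even 7 (by norm_num), t7]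
lemma t15 : t 15 = 1 := by rw [show (15:ℕ) = 2*7+1 from rfl, t_odd, t7]; norm_num

lemma hvals : h 10 = -5 ∧ h 11 = 3 ∧ h 12 = -2 ∧ h 14 = -7 ∧ h 15 = -2 := by
  simp [h, t2, t3, t4, t5, t6, t7, t8, t9, t10, t11, t12, t13, t14, t15]

lemma evals : e 10 = 2 ∧ e 11 = -1 ∧ e 12 = 1 ∧ e 14 = 3 ∧ e 15 = 1 := by
  simp [e, t2, t3, t4, t5, t6, t7, t8, t9, t10, t11, t12, t13, t14, t15]

lemma t_pow : ∀ k, 1 ≤ k → ∀ m, m < 2 ^ k → t (2 ^ k + m) = - t m := by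
  intro k
  induction k with
  | zero => omega
  | succ k ih =>
    intro _ m hm
    rcases Nat.lt_or_ge k 1 with hk | hk
    · interval_cases k
      · interval_cases m
        · rw [show 2^1+0 = 2 from rfl, t2, t0]
        · rw [show 2^1+1 = 3 from rfl, t3, t1]; norm_num
    · rcases Nat.even_or_odd m with ⟨j, hj⟩ | ⟨j, hj⟩
      · subst hj
        have hj2 : j < 2 ^ k := by
          have : 2 ^ (k+1) = 2 * 2 ^ k := by ring
          omega
        have h1 : 2 ^ (k+1) + (j + j) = 2 * (2 ^ k + j) := by ring
        have h2 : (j + j) = 2 * j := by ring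
        rcases Nat.eq_zero_or_pos j with rfl | hj0
        · simp only [h1]
          rw [t_even _ (by positivity), ih hk 0 (by positivity)]
        · rw [h1, t_even _ (by positivity), ih hk j hj2, h2, t_even _ hj0]
      · subst hj
        have hj2 : j < 2 ^ k := by
          have : 2 ^ (k+1) = 2 * 2 ^ k := by ring
          omega
        have h1 : 2 ^ (k+1) + (2*j+1) = 2 * (2 ^ k + j) + 1 := by ring
        rw [h1, t_odd, ih hk j hj2, t_odd]

lemma h_rec (n : ℕ) : h (n + 2) = t (n + 2) * h (n + 1) + h n := rfl
lemma e_rec (n : ℕ) : e (n + 2) = t (n + 2) * e (n + 1) + e n := rfl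

lemma block (f : ℕ → ℤ) (hf : ∀ n, f (n + 2) = t (n + 2) * f (n + 1) + f n)
    {k : ℕ} (hk : 1 ≤ k) :
    ∀ m, m < 2 ^ k →
      f (2 ^ k + m) = (-1) ^ m *
        (-(f (2 ^ k - 2)) * h m + (f (2 ^ k - 2) - f (2 ^ k - 1)) * e m) := by
  have h2 : 2 ≤ 2 ^ k := by
    calc 2 = 2 ^ 1 := rfl
    _ ≤ 2 ^ k := Nat.pow_le_pow_right (by norm_num) hk
  have e0 : f (2 ^ k) = - f (2 ^ k - 1) + f (2 ^ k - 2) := by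
    have key := hf (2 ^ k - 2)
    rw [(by omega : 2 ^ k - 2 + 2 = 2 ^ k), (by omega : 2 ^ k - 2 + 1 = 2 ^ k - 1)] at key
    have ht : t (2 ^ k) = -1 := by
      have := t_pow k hk 0 (by positivity)
      rw [t0] at this
      simpa using this
    rw [key, ht]; ring
  have e1 : f (2 ^ k + 1) = f (2 ^ k - 2) := by
    have key := hf (2 ^ k - 1)
    rw [(by omega : 2 ^ k - 1 + 2 = 2 ^ k + 1), (by omega : 2 ^ k - 1 + 1 = 2 ^ k)] at key
    have ht : t (2 ^ k + 1) = 1 := by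
      have := t_pow k hk 1 (by omega)
      rw [t1] at this
      simpa using this
    rw [key, ht, e0]; ring
  intro m
  induction m using Nat.strong_induction_on with
  | _ m ih =>
    match m with
    | 0 =>
      intro _
      simp only [pow_zero, Nat.add_zero]
      rw [show h 0 = 0 from rfl, show e 0 = 1 from rfl, e0]
      ring
    | 1 =>
      intro _
      simp only [pow_one]
      rw [show h 1 = 1 from rfl, show e 1 = 0 from rfl, e1]
      ring
    | (m + 2) =>
      intro hm
      have key := hf (2 ^ k + m)
      rw [(by omega : 2 ^ k + m + 2 = 2 ^ k + (m + 2)),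
          (by omega : 2 ^ k + m + 1 = 2 ^ k + (m + 1))] at key
      rw [key, t_pow k hk (m + 2) hm, ih (m + 1) (by omega) (by omega),
          ih m (by omega) (by omega), h_rec, e_rec]
      ring

lemma pow_facts (k : ℕ) (hk : 1 ≤ k) :
    2 ≤ 2 ^ k ∧ 2 ^ (k+1) - 1 = 2 ^ k + (2 ^ k - 1) ∧ 2 ^ (k+1) - 2 = 2 ^ k + (2 ^ k - 2) := by
  have h1 : 2 ^ k = 2 * 2 ^ (k-1) := by
    rw [← pow_succ']
    congr 1
    omega
  have h2 : 1 ≤ 2 ^ (k-1) := Nat.one_le_two_pow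
  have h3 : 2 ^ (k+1) = 2 * 2 ^ k := by rw [← pow_succ']
  omega

lemma neg_one_pow_sub_one (k : ℕ) (hk : 1 ≤ k) : ((-1 : ℤ)) ^ (2 ^ k - 1) = -1 := by
  have h1 : 2 ^ k = 2 * 2 ^ (k-1) := by
    rw [← pow_succ']; congr 1; omega
  have h2 : 1 ≤ 2 ^ (k-1) := Nat.one_le_two_pow
  exact Odd.neg_one_pow ⟨2 ^ (k-1) - 1, by omega⟩

lemma neg_one_pow_sub_two (k : ℕ) (hk : 1 ≤ k) : ((-1 : ℤ)) ^ (2 ^ k - 2) = 1 := by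
  have h1 : 2 ^ k = 2 * 2 ^ (k-1) := by
    rw [← pow_succ']; congr 1; omega
  have h2 : 1 ≤ 2 ^ (k-1) := Nat.one_le_two_pow
  exact Even.neg_one_pow ⟨2 ^ (k-1) - 1, by omega⟩

lemma step (k : ℕ) (hk : 1 ≤ k) :
    h (2^(k+1) - 1) = h (2^k-1) * h (2^k-2) - (h (2^k-2) - h (2^k-1)) * e (2^k-1) ∧
    h (2^(k+1) - 2) = -(h (2^k-2)) * h (2^k-2) + (h (2^k-2) - h (2^k-1)) * e (2^k-2) ∧
    e (2^(k+1) - 1) = e (2^k-2) * h (2^k-1) - (e (2^k-2) - e (2^k-1)) * e (2^k-1) ∧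
    e (2^(k+1) - 2) = -(e (2^k-2)) * h (2^k-2) + (e (2^k-2) - e (2^k-1)) * e (2^k-2) := by
  obtain ⟨h2, hp1, hp2⟩ := pow_facts k hk
  have hlt1 : 2 ^ k - 1 < 2 ^ k := by omega
  have hlt2 : 2 ^ k - 2 < 2 ^ k := by omega
  have bh1 := block h h_rec hk (2 ^ k - 1) hlt1
  have bh2 := block h h_rec hk (2 ^ k - 2) hlt2
  have be1 := block e e_rec hk (2 ^ k - 1) hlt1
  have be2 := block e e_rec hk (2 ^ k - 2) hlt2
  rw [neg_one_pow_sub_one k hk] at bh1 be1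
  rw [neg_one_pow_sub_two k hk] at bh2 be2
  refine ⟨?_, ?_, ?_, ?_⟩
  · rw [hp1, bh1]; ring
  · rw [hp2, bh2]; ring
  · rw [hp1, be1]; ring
  · rw [hp2, be2]; ring

def Invar (k : ℕ) : Prop :=
  (h (2^k-1) < 0 ∧ 0 < e (2^k-1) ∧ h (2^k-2) < h (2^k-1) ∧ e (2^k-1) < e (2^k-2)) ∨
  (0 < h (2^k-1) ∧ e (2^k-1) < 0 ∧ h (2^k-2) < 0 ∧ 0 < e (2^k-2) ∧
    h (2^k-1) < -(h (2^k-2)) ∧ -(e (2^k-1)) < e (2^k-2))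

lemma inv_alg (a b c d a2 b2 c2 d2 : ℤ)
    (s1 : a2 = a * b - (b - a) * c) (s2 : b2 = -b * b + (b - a) * d)
    (s3 : c2 = d * a - (d - c) * c) (s4 : d2 = -d * b + (d - c) * d)
    (hI : (a < 0 ∧ 0 < c ∧ b < a ∧ c < d) ∨
      (0 < a ∧ c < 0 ∧ b < 0 ∧ 0 < d ∧ a < -b ∧ -c < d)) :
    (a2 < 0 ∧ 0 < c2 ∧ b2 < a2 ∧ c2 < d2) ∨
      (0 < a2 ∧ c2 < 0 ∧ b2 < 0 ∧ 0 < d2 ∧ a2 < -b2 ∧ -c2 < d2) := by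
  subst s1 s2 s3 s4
  rcases hI with ⟨i1, i2, i3, i4⟩ | ⟨i1, i2, i3, i4, i5, i6⟩
  · have hb0 : b < 0 := lt_trans i3 i1
    have hd0 : 0 < d := lt_trans i2 i4
    right
    refine ⟨?_, ?_, ?_, ?_, ?_, ?_⟩
    · nlinarith [mul_pos_of_neg_of_neg i1 hb0, mul_pos (by linarith : (0:ℤ) < a - b) i2]
    · nlinarith [mul_neg_of_pos_of_neg hd0 i1, mul_pos (by linarith : (0:ℤ) < d - c) i2]
    · nlinarith [mul_pos_of_neg_of_neg hb0 hb0,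
        mul_neg_of_neg_of_pos (by linarith : b - a < 0) hd0]
    · nlinarith [mul_pos hd0 (by linarith : (0:ℤ) < -b),
        mul_pos (by linarith : (0:ℤ) < d - c) hd0]
    · nlinarith [mul_neg_of_pos_of_neg (by linarith : (0:ℤ) < a - b)
        (by linarith : b + c - d < 0)]
    · nlinarith [mul_pos hd0 (by linarith : (0:ℤ) < a - b), sq_nonneg (c - d)]
  · left
    refine ⟨?_, ?_, ?_, ?_⟩
    · nlinarith [mul_neg_of_pos_of_neg i1 i3,
        mul_neg_of_pos_of_neg (by linarith : (0:ℤ) < a - b) i2]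
    · nlinarith [mul_pos i4 i1, mul_neg_of_pos_of_neg (by linarith : (0:ℤ) < d - c) i2]
    · nlinarith [mul_neg_of_pos_of_neg (by linarith : (0:ℤ) < -b) (by linarith : a + b < 0),
        mul_neg_of_neg_of_pos (by linarith : b - a < 0) (by linarith : (0:ℤ) < c + d)]
    · nlinarith [mul_pos i4 (by linarith : (0:ℤ) < -(a + b)),
        mul_pos (by linarith : (0:ℤ) < d - c) (by linarith : (0:ℤ) < c + d)]

lemma inv_step (k : ℕ) (hk : 1 ≤ k) (hI : Invar k) : Invar (k+1) := by
  obtain ⟨s1, s2, s3, s4⟩ := step k hk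
  exact inv_alg (h (2^k-1)) (h (2^k-2)) (e (2^k-1)) (e (2^k-2)) _ _ _ _ s1 s2 s3 s4 hI

lemma inv_all (k : ℕ) (hk : 4 ≤ k) : Invar k := by
  induction k, hk using Nat.le_induction with
  | base =>
    obtain ⟨_, _, _, h14, h15⟩ := hvals
    obtain ⟨_, _, _, e14, e15⟩ := evals
    left
    rw [show (2:ℕ)^4 - 1 = 15 from rfl, show (2:ℕ)^4 - 2 = 14 from rfl,
      h14, h15, e14, e15]
    norm_num
  | succ k hk ih => exact inv_step k (by omega) ih

lemma good (k : ℕ) (hk : 4 ≤ k) :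
    h (2^k + 10) < h (2^k + 10 + 1) ∧ h (2^k + 10 + 1) < h (2^k + 10 + 2) := by
  have h16 : 16 ≤ 2 ^ k := by
    calc 16 = 2 ^ 4 := rfl
    _ ≤ 2 ^ k := Nat.pow_le_pow_right (by norm_num) hk
  have hk1 : 1 ≤ k := by omega
  obtain ⟨h10, h11, h12, _, _⟩ := hvals
  obtain ⟨e10, e11, e12, _, _⟩ := evals
  have b10 := block h h_rec hk1 10 (by omega)
  have b11 := block h h_rec hk1 11 (by omega)
  have b12 := block h h_rec hk1 12 (by omega)
  rw [h10, e10] at b10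
  rw [h11, e11] at b11
  rw [h12, e12] at b12
  norm_num at b10 b11 b12
  rw [show 2^k + 10 + 1 = 2^k + 11 from rfl, show 2^k + 10 + 2 = 2^k + 12 from rfl,
    b10, b11, b12]
  have hI := inv_all k hk
  rcases hI with ⟨i1, i2, i3, i4⟩ | ⟨i1, i2, i3, i4, i5, i6⟩ <;>
    constructor <;> linarith

theorem stmt8 : {n : ℕ | h n < h (n + 1) ∧ h (n + 1) < h (n + 2)}.Infinite := by
  apply Set.infinite_of_injective_forall_mem (f := fun j : ℕ => 2 ^ (j + 4) + 10)
  · intro i j hij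
    simp only at hij
    have := Nat.pow_right_injective (le_refl 2) (by omega : 2 ^ (i+4) = 2 ^ (j+4))
    omega
  · intro j
    exact good (j + 4) (by omega)
end

section
/- There is no n ∈ ℕ with h_n > h_{n+1} > h_{n+2} > h_{n+3} > h_{n+4}. -/
lemma t_pm (n : ℕ) : t n = 1 ∨ t n = -1 := by
  unfold t
  rcases Nat.even_or_odd ((Nat.digits 2 n).sum) with he | ho
  · exact Or.inl he.neg_one_pow
  · exact Or.inr ho.neg_one_pow

lemma digitsum_even (k : ℕ) : (Nat.digits 2 (2*k)).sum = (Nat.digits 2 k).sum := by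
  rcases Nat.eq_zero_or_pos k with rfl | hk
  · simp
  · rw [Nat.digits_def' (by norm_num : 1 < 2) (by omega)]
    have h1 : (2*k) % 2 = 0 := by omega
    have h2 : (2*k) / 2 = k := by omega
    rw [h1, h2]
    simp

lemma digitsum_odd (k : ℕ) : (Nat.digits 2 (2*k+1)).sum = (Nat.digits 2 k).sum + 1 := by
  rw [Nat.digits_def' (by norm_num : 1 < 2) (by omega)]
  have h1 : (2*k+1) % 2 = 1 := by omega
  have h2 : (2*k+1) / 2 = k := by omega
  rw [h1, h2]
  simp [Nat.add_comm]

lemma t_flip (k : ℕ) : t (2*k+1) = - t (2*k) := by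
  unfold t
  rw [digitsum_odd, digitsum_even, pow_succ]
  ring

lemma no_three (m : ℕ) (h1 : t m = t (m+1)) (h2 : t (m+1) = t (m+2)) : False := by
  rcases Nat.even_or_odd m with ⟨k, hk⟩ | ⟨k, hk⟩
  · have hm : m = 2*k := by omega
    have := t_flip k
    rw [← hm] at this
    rcases t_pm m with hp | hp <;> rw [hp] at this h1 <;> omega
  · have := t_flip (k+1)
    rw [show 2*(k+1)+1 = m+2 from by omega, show 2*(k+1) = m+1 from by omega] at this
    rcases t_pm (m+1) with hp | hp <;> rw [hp] at this h2 <;> omega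

theorem stmt11 : ¬ ∃ n : ℕ, h n > h (n + 1) ∧ h (n + 1) > h (n + 2) ∧
    h (n + 2) > h (n + 3) ∧ h (n + 3) > h (n + 4) := by
  rintro ⟨n, h1, h2, h3, h4⟩
  have e1 : h (n+2) = t (n+2) * h (n+1) + h n := by rw [h]
  have e2 : h (n+1+2) = t (n+1+2) * h (n+1+1) + h (n+1) := by rw [h]
  have e3 : h (n+2+2) = t (n+2+2) * h (n+2+1) + h (n+2) := by rw [h]
  have q2 : n+1+2 = n+3 := by omega
  have q2' : n+1+1 = n+2 := by omega
  have q3 : n+2+2 = n+4 := by omega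
  have q3' : n+2+1 = n+3 := by omega
  rw [q2, q2'] at e2
  rw [q3, q3'] at e3
  have hε2 := t_pm (n+3)
  have hε1 := t_pm (n+2)
  have hε3 := t_pm (n+4)
  rcases hε2 with p2 | p2 <;> rw [p2] at e2
  · -- d = c + b, so b < 0
    have hb : h (n+1) < 0 := by linarith
    have f1 : t (n+2) = 1 := by
      rcases hε1 with p1 | p1
      · exact p1
      · exfalso; rw [p1] at e1; linarith
    have f3 : t (n+4) = 1 := by
      rcases hε3 with p3 | p3
      · exact p3
      · exfalso; rw [p3] at e3; linarith
    exact no_three (n+2) (by rw [f1, p2]) (by rw [p2, f3])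
  · -- d = -c + b
    have hc : 0 < h (n+2) := by linarith
    have f1 : t (n+2) = -1 := by
      rcases hε1 with p1 | p1
      · exfalso; rw [p1] at e1; linarith
      · exact p1
    have f3 : t (n+4) = -1 := by
      rcases hε3 with p3 | p3
      · exfalso; rw [p3] at e3; linarith
      · exact p3
    exact no_three (n+2) (by rw [f1, p2]) (by rw [p2, f3])
end
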